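/- In the setting of the monotone coupling map $h=G^{-1}\circ F$ for densities $f_1,f_2>0$ relative to $\mathcal N(0,\sigma^2)$ with $1/f_1$ and $f_2$ bounded: for all $t>0$, $h(t)\le t+\frac{2\sigma^2}{t}\log(\|f_2\|_\infty\|1/f_1\|_\infty)$, and for all $t<0$, $h(t)\ge t-\frac{2\sigma^2}{|t|}\log(\|f_2\|_\infty\|1/f_1\|_\infty)$. -/

import Mathlib

open MeasureTheory ProbabilityTheory Set Real Filter Topology


lemma my_change_var (v : NNReal) (d : ℝ) (s : Set ℝ) :
    ∫ x in (fun x => x + d) ⁻¹' s, gaussianPDFReal 0 v (x + d) = ∫ x in s, gaussianPDFReal 0 v x :=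
  (measurePreserving_add_right volume d).setIntegral_preimage_emb
    (measurableEmbedding_addRight d) _ s

lemma my_tail_right (v : NNReal) (hv : v ≠ 0) {t d : ℝ} (ht : 0 < t) (hd : 0 ≤ d) :
    (gaussianReal 0 v (Ioi (t + d))).toReal
      ≤ Real.exp (-(t * d) / v) * (gaussianReal 0 v (Ioi t)).toReal := by
  have hnn : ∀ s : Set ℝ, 0 ≤ ∫ x in s, gaussianPDFReal 0 v x := fun s =>
    integral_nonneg (fun x => gaussianPDFReal_nonneg 0 v x)
  rw [gaussianReal_apply_eq_integral 0 hv, gaussianReal_apply_eq_integral 0 hv,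
      ENNReal.toReal_ofReal (hnn _), ENNReal.toReal_ofReal (hnn _)]
  have hpre : (fun x : ℝ => x + d) ⁻¹' Ioi (t + d) = Ioi t := by
    ext x; simp only [Set.mem_preimage, Set.mem_Ioi]
    constructor <;> intro h <;> linarith
  have hchg : ∫ x in Ioi (t + d), gaussianPDFReal 0 v x
      = ∫ x in Ioi t, gaussianPDFReal 0 v (x + d) := by
    rw [← my_change_var v d (Ioi (t + d)), hpre]
  rw [hchg]
  have hint : IntegrableOn (gaussianPDFReal 0 v) (Ioi t) volume :=
    (integrable_gaussianPDFReal 0 v).integrableOn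
  have hint2 : IntegrableOn (fun x => gaussianPDFReal 0 v (x + d)) (Ioi t) volume :=
    ((integrable_gaussianPDFReal 0 v).comp_add_right d).integrableOn
  have hv' : (0 : ℝ) < v := by positivity
  have hptwise : ∀ x ∈ Ioi t, gaussianPDFReal 0 v (x + d)
      ≤ Real.exp (-(t * d) / v) * gaussianPDFReal 0 v x := by
    intro x hx
    simp only [Set.mem_Ioi] at hx
    simp only [gaussianPDFReal, sub_zero]
    have key : rexp (-(x + d) ^ 2 / (2 * (v:ℝ)))
        ≤ rexp (-(t * d) / (v:ℝ)) * rexp (-x ^ 2 / (2 * (v:ℝ))) := by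
      rw [← Real.exp_add, Real.exp_le_exp,
        div_add_div _ _ (ne_of_gt hv') (by positivity : (2 * (v:ℝ)) ≠ 0),
        div_le_div_iff₀ (by positivity) (by positivity)]
      nlinarith [sq_nonneg d, mul_pos hv' hv',
        mul_nonneg (mul_nonneg (sub_nonneg.2 hx.le) hd) hv'.le]
    have c0 : (0:ℝ) ≤ (√(2 * π * (v:ℝ)))⁻¹ := by positivity
    refine le_trans (mul_le_mul_of_nonneg_left key c0) (le_of_eq (by ring))
  calc ∫ x in Ioi t, gaussianPDFReal 0 v (x + d)
      ≤ ∫ x in Ioi t, Real.exp (-(t * d) / v) * gaussianPDFReal 0 v x :=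
        setIntegral_mono_on hint2 (hint.const_mul _) measurableSet_Ioi hptwise
    _ = Real.exp (-(t * d) / v) * ∫ x in Ioi t, gaussianPDFReal 0 v x := by
        rw [integral_const_mul]

lemma my_tail_left (v : NNReal) (hv : v ≠ 0) {t d : ℝ} (ht : t < 0) (hd : 0 ≤ d) :
    (gaussianReal 0 v (Iic (t - d))).toReal
      ≤ Real.exp ((t * d) / v) * (gaussianReal 0 v (Iic t)).toReal := by
  have hnn : ∀ s : Set ℝ, 0 ≤ ∫ x in s, gaussianPDFReal 0 v x := fun s =>
    integral_nonneg (fun x => gaussianPDFReal_nonneg 0 v x)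
  rw [gaussianReal_apply_eq_integral 0 hv, gaussianReal_apply_eq_integral 0 hv,
      ENNReal.toReal_ofReal (hnn _), ENNReal.toReal_ofReal (hnn _)]
  have hpre : (fun x : ℝ => x + (-d)) ⁻¹' Iic (t - d) = Iic t := by
    ext x; simp only [Set.mem_preimage, Set.mem_Iic]
    constructor <;> intro h <;> linarith
  have hchg : ∫ x in Iic (t - d), gaussianPDFReal 0 v x
      = ∫ x in Iic t, gaussianPDFReal 0 v (x + (-d)) := by
    rw [← my_change_var v (-d) (Iic (t - d)), hpre]
  rw [hchg]
  have hint : IntegrableOn (gaussianPDFReal 0 v) (Iic t) volume :=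
    (integrable_gaussianPDFReal 0 v).integrableOn
  have hint2 : IntegrableOn (fun x => gaussianPDFReal 0 v (x + (-d))) (Iic t) volume :=
    ((integrable_gaussianPDFReal 0 v).comp_add_right (-d)).integrableOn
  have hv' : (0 : ℝ) < v := by positivity
  have hptwise : ∀ x ∈ Iic t, gaussianPDFReal 0 v (x + (-d))
      ≤ Real.exp ((t * d) / v) * gaussianPDFReal 0 v x := by
    intro x hx
    simp only [Set.mem_Iic] at hx
    simp only [gaussianPDFReal, sub_zero]
    have key : rexp (-(x + (-d)) ^ 2 / (2 * (v:ℝ)))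
        ≤ rexp ((t * d) / (v:ℝ)) * rexp (-x ^ 2 / (2 * (v:ℝ))) := by
      rw [← Real.exp_add, Real.exp_le_exp,
        div_add_div _ _ (ne_of_gt hv') (by positivity : (2 * (v:ℝ)) ≠ 0),
        div_le_div_iff₀ (by positivity) (by positivity)]
      nlinarith [sq_nonneg d, mul_pos hv' hv',
        mul_nonneg (mul_nonneg (sub_nonneg.2 hx) hd) hv'.le]
    have c0 : (0:ℝ) ≤ (√(2 * π * (v:ℝ)))⁻¹ := by positivity
    refine le_trans (mul_le_mul_of_nonneg_left key c0) (le_of_eq (by ring))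
  calc ∫ x in Iic t, gaussianPDFReal 0 v (x + (-d))
      ≤ ∫ x in Iic t, Real.exp ((t * d) / v) * gaussianPDFReal 0 v x :=
        setIntegral_mono_on hint2 (hint.const_mul _) measurableSet_Iic hptwise
    _ = Real.exp ((t * d) / v) * ∫ x in Iic t, gaussianPDFReal 0 v x := by
        rw [integral_const_mul]


lemma my_pos (v : NNReal) (hv : v ≠ 0) {s : Set ℝ} (hs : MeasurableSet s)
    (h0 : 0 < volume s) : 0 < (gaussianReal 0 v s).toReal := by
  rw [gaussianReal_apply_eq_integral 0 hv,
    ENNReal.toReal_ofReal (integral_nonneg (fun x => gaussianPDFReal_nonneg 0 v x))]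
  rw [setIntegral_pos_iff_support_of_nonneg_ae
    (ae_of_all _ (fun x => gaussianPDFReal_nonneg 0 v x))
    ((integrable_gaussianPDFReal 0 v).integrableOn)]
  have hsup : Function.support (gaussianPDFReal 0 v) = Set.univ :=
    Set.eq_univ_of_forall fun x => (gaussianPDFReal_pos 0 v x hv).ne'
  rw [hsup, Set.univ_inter]
  exact h0


/-- Quantitative bounds on the monotone coupling map `h = G⁻¹ ∘ F` for
densities `f₁, f₂ > 0` relative to `N(0,σ²)`, assuming `1/f₁ ≤ B₁` and `f₂ ≤ A₂`:
for `t > 0`, `h(t) ≤ t + (2σ²/t) log(A₂ B₁)`, and for `t < 0`,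
`h(t) ≥ t - (2σ²/|t|) log(A₂ B₁)`. -/
theorem stmt10 (σ : NNReal) (hσ : 0 < σ) (f1 f2 : ℝ → ℝ)
    (hm1 : Measurable f1) (hm2 : Measurable f2)
    (h1pos : ∀ t, 0 < f1 t) (h2pos : ∀ t, 0 < f2 t)
    (hint1 : ∫ t, f1 t ∂(gaussianReal 0 (σ ^ 2)) = 1)
    (hint2 : ∫ t, f2 t ∂(gaussianReal 0 (σ ^ 2)) = 1)
    (A2 B1 : ℝ) (hA2 : ∀ t, f2 t ≤ A2) (hB1 : ∀ t, 1 / f1 t ≤ B1)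
    (F G : ℝ → ℝ)
    (hF : F = fun t => ∫ s in Set.Iic t, f1 s ∂(gaussianReal 0 (σ ^ 2)))
    (hG : G = fun t => ∫ s in Set.Iic t, f2 s ∂(gaussianReal 0 (σ ^ 2)))
    (h : ℝ → ℝ) (hh : h = fun t => sInf {s : ℝ | F t ≤ G s}) :
    (∀ t : ℝ, 0 < t → h t ≤ t + 2 * (σ : ℝ) ^ 2 / t * Real.log (A2 * B1)) ∧
    (∀ t : ℝ, t < 0 → h t ≥ t - 2 * (σ : ℝ) ^ 2 / |t| * Real.log (A2 * B1)) := by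
  set μ : Measure ℝ := gaussianReal 0 (σ ^ 2) with hμ
  have hv : (σ ^ 2 : NNReal) ≠ 0 := pow_ne_zero 2 hσ.ne'
  have hcast : ((σ ^ 2 : NNReal) : ℝ) = (σ : ℝ) ^ 2 := by push_cast; ring
  have hσR : (0:ℝ) < (σ:ℝ) := hσ
  have hIf1 : Integrable f1 μ := by
    by_contra hc; rw [integral_undef hc] at hint1; norm_num at hint1
  have hIf2 : Integrable f2 μ := by
    by_contra hc; rw [integral_undef hc] at hint2; norm_num at hint2
  have hB1pos : 0 < B1 := lt_of_lt_of_le (one_div_pos.2 (h1pos 0)) (hB1 0)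
  have hA2pos : 0 < A2 := lt_of_lt_of_le (h2pos 0) (hA2 0)
  have hf1lb : ∀ x, B1⁻¹ ≤ f1 x := by
    intro x
    have h1 := (div_le_iff₀ (h1pos x)).1 (hB1 x)
    rw [inv_eq_one_div, div_le_iff₀ hB1pos]
    nlinarith
  -- splits
  have Fsplit : ∀ t, F t + ∫ x in Set.Ioi t, f1 x ∂μ = 1 := by
    intro t
    rw [hF]
    have := integral_add_compl (s := Set.Iic t) measurableSet_Iic hIf1 (f := f1)
    rwa [Set.compl_Iic, hint1] at this
  have Gsplit : ∀ t, G t + ∫ x in Set.Ioi t, f2 x ∂μ = 1 := by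
    intro t
    rw [hG]
    have := integral_add_compl (s := Set.Iic t) measurableSet_Iic hIf2 (f := f2)
    rwa [Set.compl_Iic, hint2] at this
  -- bounds
  have hIoi1 : ∀ s : ℝ, B1⁻¹ * (μ (Set.Ioi s)).toReal ≤ ∫ x in Set.Ioi s, f1 x ∂μ := by
    intro s
    calc B1⁻¹ * (μ (Set.Ioi s)).toReal = ∫ _x in Set.Ioi s, B1⁻¹ ∂μ := by
          rw [setIntegral_const, smul_eq_mul, mul_comm]; rfl
      _ ≤ ∫ x in Set.Ioi s, f1 x ∂μ :=
          setIntegral_mono_on (integrableOn_const (measure_ne_top μ _))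
            hIf1.integrableOn measurableSet_Ioi (fun x _ => hf1lb x)
  have hIic1 : ∀ s : ℝ, B1⁻¹ * (μ (Set.Iic s)).toReal ≤ ∫ x in Set.Iic s, f1 x ∂μ := by
    intro s
    calc B1⁻¹ * (μ (Set.Iic s)).toReal = ∫ _x in Set.Iic s, B1⁻¹ ∂μ := by
          rw [setIntegral_const, smul_eq_mul, mul_comm]; rfl
      _ ≤ ∫ x in Set.Iic s, f1 x ∂μ :=
          setIntegral_mono_on (integrableOn_const (measure_ne_top μ _))
            hIf1.integrableOn measurableSet_Iic (fun x _ => hf1lb x)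
  have hIoi2 : ∀ s : ℝ, (∫ x in Set.Ioi s, f2 x ∂μ) ≤ A2 * (μ (Set.Ioi s)).toReal := by
    intro s
    calc (∫ x in Set.Ioi s, f2 x ∂μ) ≤ ∫ _x in Set.Ioi s, A2 ∂μ :=
          setIntegral_mono_on hIf2.integrableOn
            (integrableOn_const (measure_ne_top μ _))
            measurableSet_Ioi (fun x _ => hA2 x)
      _ = A2 * (μ (Set.Ioi s)).toReal := by rw [setIntegral_const, smul_eq_mul, mul_comm]; rfl
  have hIic2 : ∀ s : ℝ, (∫ x in Set.Iic s, f2 x ∂μ) ≤ A2 * (μ (Set.Iic s)).toReal := by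
    intro s
    calc (∫ x in Set.Iic s, f2 x ∂μ) ≤ ∫ _x in Set.Iic s, A2 ∂μ :=
          setIntegral_mono_on hIf2.integrableOn
            (integrableOn_const (measure_ne_top μ _))
            measurableSet_Iic (fun x _ => hA2 x)
      _ = A2 * (μ (Set.Iic s)).toReal := by rw [setIntegral_const, smul_eq_mul, mul_comm]; rfl
  -- positivity
  have hposIic : ∀ s : ℝ, 0 < (μ (Set.Iic s)).toReal := fun s =>
    my_pos _ hv measurableSet_Iic (by rw [Real.volume_Iic]; exact ENNReal.zero_lt_top)
  have hposIoi : ∀ s : ℝ, 0 < (μ (Set.Ioi s)).toReal := fun s =>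
    my_pos _ hv measurableSet_Ioi (by rw [Real.volume_Ioi]; exact ENNReal.zero_lt_top)
  -- A2, B1 ≥ 1
  have hA2ge1 : 1 ≤ A2 := by
    have h1 : (∫ x, f2 x ∂μ) ≤ ∫ _x, A2 ∂μ := integral_mono hIf2 (integrable_const _) hA2
    rwa [hint2, integral_const, probReal_univ, one_smul] at h1
  have hB1ge1 : 1 ≤ B1 := by
    have h1 : (∫ _x, B1⁻¹ ∂μ) ≤ ∫ x, f1 x ∂μ := integral_mono (integrable_const _) hIf1 hf1lb
    rw [hint1, integral_const, probReal_univ, one_smul] at h1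
    nlinarith [mul_le_mul_of_nonneg_right h1 hB1pos.le, mul_inv_cancel₀ hB1pos.ne']
  set L := Real.log (A2 * B1) with hLdef
  have hL : 0 ≤ L := Real.log_nonneg (by nlinarith)
  have hexpL : Real.exp L = A2 * B1 := Real.exp_log (by positivity)
  have he2 : Real.exp (-(2 * L)) = ((A2 * B1) * (A2 * B1))⁻¹ := by
    rw [Real.exp_neg, two_mul, Real.exp_add, hexpL]
  have halg : A2 * ((A2 * B1) * (A2 * B1))⁻¹ ≤ B1⁻¹ := by
    have h1 : A2 * ((A2 * B1) * (A2 * B1))⁻¹ = (A2 * B1 * B1)⁻¹ := by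
      field_simp
    rw [h1]
    apply inv_anti₀ hB1pos
    nlinarith [mul_le_mul_of_nonneg_right hA2ge1 (mul_nonneg hB1pos.le hB1pos.le),
      mul_le_mul_of_nonneg_right hB1ge1 hB1pos.le]
  -- tendsto lemmas
  have hIciTo1 : Tendsto (fun m : ℝ => (μ (Set.Ici m)).toReal) atBot (𝓝 1) := by
    have h1 := (ENNReal.tendsto_toReal (by simp : μ Set.univ ≠ ⊤)).comp
      (tendsto_measure_Ici_atBot μ)
    simpa [measure_univ, Function.comp_def] using h1
  have hIicTo1 : Tendsto (fun m : ℝ => (μ (Set.Iic m)).toReal) atTop (𝓝 1) := by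
    have h1 := (ENNReal.tendsto_toReal (by simp : μ Set.univ ≠ ⊤)).comp
      (tendsto_measure_Iic_atTop μ)
    simpa [measure_univ, Function.comp_def] using h1
  have tendIicBot : Tendsto (fun m : ℝ => (μ (Set.Iic m)).toReal) atBot (𝓝 0) := by
    apply squeeze_zero (fun m => ENNReal.toReal_nonneg)
      (g := fun m => 1 - (μ (Set.Ici (m + 1))).toReal)
    · intro m
      have hd : Disjoint (Set.Iic m) (Set.Ici (m + 1)) :=
        Set.Iic_disjoint_Ici.2 (by norm_num)
      have hle : μ (Set.Iic m) + μ (Set.Ici (m + 1)) ≤ 1 := by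
        rw [← measure_union hd measurableSet_Ici]
        exact (measure_mono (Set.subset_univ _)).trans_eq measure_univ
      have h2 := ENNReal.toReal_mono (by norm_num) hle
      rw [ENNReal.toReal_add (measure_ne_top μ _) (measure_ne_top μ _),
        ENNReal.toReal_one] at h2
      linarith
    · have h3 : Tendsto (fun m : ℝ => (μ (Set.Ici (m + 1))).toReal) atBot (𝓝 1) :=
        hIciTo1.comp (tendsto_atBot_add_const_right atBot 1 tendsto_id)
      simpa using h3.const_sub 1
  have tendIoiTop : Tendsto (fun s : ℝ => (μ (Set.Ioi s)).toReal) atTop (𝓝 0) := by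
    apply squeeze_zero (fun m => ENNReal.toReal_nonneg)
      (g := fun s => 1 - (μ (Set.Iic s)).toReal)
    · intro s
      have hd : Disjoint (Set.Iic s) (Set.Ioi s) := Set.Iic_disjoint_Ioi le_rfl
      have hle : μ (Set.Iic s) + μ (Set.Ioi s) ≤ 1 := by
        rw [← measure_union hd measurableSet_Ioi]
        exact (measure_mono (Set.subset_univ _)).trans_eq measure_univ
      have h2 := ENNReal.toReal_mono (by norm_num) hle
      rw [ENNReal.toReal_add (measure_ne_top μ _) (measure_ne_top μ _),
        ENNReal.toReal_one] at h2
      linarith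
    · simpa using hIicTo1.const_sub 1
  constructor
  · -- part 1
    intro t ht
    set d := 2 * (σ : ℝ) ^ 2 / t * L with hddef
    have hd0 : 0 ≤ d := by positivity
    rw [hh]
    have mem : F t ≤ G (t + d) := by
      have htail := my_tail_right (σ ^ 2) hv ht hd0
      have hcalcexp : -(t * d) / ((σ ^ 2 : NNReal) : ℝ) = -(2 * L) := by
        rw [hcast, hddef]
        field_simp
      rw [hcalcexp, he2] at htail
      have hchain : (∫ x in Set.Ioi (t + d), f2 x ∂μ) ≤ ∫ x in Set.Ioi t, f1 x ∂μ := by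
        calc (∫ x in Set.Ioi (t + d), f2 x ∂μ) ≤ A2 * (μ (Set.Ioi (t + d))).toReal :=
              hIoi2 _
          _ ≤ A2 * (((A2 * B1) * (A2 * B1))⁻¹ * (μ (Set.Ioi t)).toReal) := by
              apply mul_le_mul_of_nonneg_left htail hA2pos.le
          _ ≤ B1⁻¹ * (μ (Set.Ioi t)).toReal := by
              rw [← mul_assoc]
              exact mul_le_mul_of_nonneg_right halg ENNReal.toReal_nonneg
          _ ≤ ∫ x in Set.Ioi t, f1 x ∂μ := hIoi1 t
      have e1 := Fsplit t
      have e2 := Gsplit (t + d)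
      linarith
    have hFpos : 0 < F t := by
      have h0 : B1⁻¹ * (μ (Set.Iic t)).toReal ≤ F t := by
        simp only [hF]; exact hIic1 t
      exact lt_of_lt_of_le (mul_pos (inv_pos.2 hB1pos) (hposIic t)) h0
    have bdd : BddBelow {s : ℝ | F t ≤ G s} := by
      have htend : Tendsto (fun m : ℝ => A2 * (μ (Set.Iic m)).toReal) atBot (𝓝 0) := by
        simpa using tendIicBot.const_mul A2
      obtain ⟨m, hm⟩ := (htend.eventually_lt_const hFpos).exists
      refine ⟨m, fun s hs => ?_⟩
      by_contra hsm
      push_neg at hsm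
      have hGs : G s ≤ A2 * (μ (Set.Iic m)).toReal := by
        calc G s ≤ A2 * (μ (Set.Iic s)).toReal := by simp only [hG]; exact hIic2 s
          _ ≤ A2 * (μ (Set.Iic m)).toReal := by
              apply mul_le_mul_of_nonneg_left _ hA2pos.le
              exact ENNReal.toReal_mono (measure_ne_top μ _)
                (measure_mono (Set.Iic_subset_Iic.2 hsm.le))
      have := hs.out
      linarith
    exact csInf_le bdd mem
  · -- part 2
    intro t ht
    set d := 2 * (σ : ℝ) ^ 2 / |t| * L with hddef
    have habs : |t| = -t := abs_of_neg ht
    have htn : t ≠ 0 := ht.ne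
    have hd0 : 0 ≤ d := by
      apply mul_nonneg (div_nonneg (by positivity) (abs_nonneg t)) hL
    rw [hh]
    have hεpos : 0 < ∫ x in Set.Ioi t, f1 x ∂μ :=
      lt_of_lt_of_le (mul_pos (inv_pos.2 hB1pos) (hposIoi t)) (hIoi1 t)
    have hne : {s : ℝ | F t ≤ G s}.Nonempty := by
      have htend : Tendsto (fun s : ℝ => A2 * (μ (Set.Ioi s)).toReal) atTop (𝓝 0) := by
        simpa using tendIoiTop.const_mul A2
      obtain ⟨s0, hs0⟩ := (htend.eventually_lt_const hεpos).exists
      refine ⟨s0, ?_⟩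
      have e1 := Fsplit t
      have e2 := Gsplit s0
      have e3 := hIoi2 s0
      simp only [Set.mem_setOf_eq]
      linarith
    apply le_csInf hne
    intro s hs
    simp only [Set.mem_setOf_eq] at hs
    by_contra hc
    push_neg at hc
    have hstd : s < t - d := hc
    -- strict monotonicity: G s < G (t - d)
    have hsplit2 : G (t - d) = G s + ∫ x in Set.Ioc s (t - d), f2 x ∂μ := by
      simp only [hG]
      have hu : Set.Iic s ∪ Set.Ioc s (t - d) = Set.Iic (t - d) :=
        Set.Iic_union_Ioc_eq_Iic hstd.le
      rw [← hu, setIntegral_union (Set.Iic_disjoint_Ioc le_rfl) measurableSet_Ioc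
        hIf2.integrableOn hIf2.integrableOn]
    have hpos2 : 0 < ∫ x in Set.Ioc s (t - d), f2 x ∂μ := by
      rw [setIntegral_pos_iff_support_of_nonneg_ae
        (ae_of_all _ (fun x => (h2pos x).le)) hIf2.integrableOn]
      have hsup : Function.support f2 = Set.univ :=
        Set.eq_univ_of_forall fun x => (h2pos x).ne'
      rw [hsup, Set.univ_inter]
      have := my_pos (σ ^ 2) hv (measurableSet_Ioc (a := s) (b := t - d))
        (by rw [Real.volume_Ioc]; exact ENNReal.ofReal_pos.2 (by linarith))
      exact (ENNReal.toReal_pos_iff.1 this).1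
    have hGlt : G s < G (t - d) := by linarith
    have hGle : G (t - d) ≤ F t := by
      have htail := my_tail_left (σ ^ 2) hv ht hd0
      have hcalcexp : (t * d) / ((σ ^ 2 : NNReal) : ℝ) = -(2 * L) := by
        rw [hcast, hddef, habs]
        field_simp
      rw [hcalcexp, he2] at htail
      calc G (t - d) ≤ A2 * (μ (Set.Iic (t - d))).toReal := by simp only [hG]; exact hIic2 _
        _ ≤ A2 * (((A2 * B1) * (A2 * B1))⁻¹ * (μ (Set.Iic t)).toReal) :=
            mul_le_mul_of_nonneg_left htail hA2pos.le
        _ ≤ B1⁻¹ * (μ (Set.Iic t)).toReal := by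
            rw [← mul_assoc]
            exact mul_le_mul_of_nonneg_right halg ENNReal.toReal_nonneg
        _ ≤ ∫ x in Set.Iic t, f1 x ∂μ := hIic1 t
        _ = F t := by simp only [hF]
    linarith
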